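/- For m odd, the fibration p: G(S^m, n) → S^m given by p(x_1,...,x_n) = x_1 admits a continuous section: choosing a nowhere-vanishing tangent vector field V on S^m, the map s(x) = (x_1,...,x_n) with x_j = cos((j−1)π/(n−1))·x + sin((j−1)π/(n−1))·V(x) is a well-defined continuous section, i.e., the points x_j lie on S^m, are pairwise-consecutively distinct, and x_n ≠ x_1. -/

import Mathlib

open Real
open scoped RealInnerProductSpace

lemma inner_comb {E : Type*} [NormedAddCommGroup E] [InnerProductSpace ℝ E]
    (x v : E) (hx : ‖x‖ = 1) (hperp : ⟪x, v⟫ = 0) (a b : ℝ) :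
    ⟪x, a • x + b • v⟫ = a := by
  rw [inner_add_right, real_inner_smul_right, real_inner_smul_right,
    real_inner_self_eq_norm_sq, hx, hperp]
  ring

/-- For `m` odd, the fibration `p : G(S^m, n) → S^m`, `p(x_1,...,x_n) = x_1`,
admits a continuous section: given a continuous nowhere-vanishing (unit,
tangent) vector field `V` on `S^m`, the formula
`x_j = cos((j−1)π/(n−1)) x + sin((j−1)π/(n−1)) V(x)` defines points on the
sphere which are pairwise-consecutively distinct with `x_n ≠ x_1`, and each
depends continuously on `x`. -/
theorem section_of_cyclic_fibration (m n : ℕ) (hm : Odd m) (hn : 2 ≤ n)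
    (V : EuclideanSpace ℝ (Fin (m + 1)) → EuclideanSpace ℝ (Fin (m + 1)))
    (hV : Continuous V)
    (x : EuclideanSpace ℝ (Fin (m + 1))) (hx : ‖x‖ = 1)
    (hVx : ‖V x‖ = 1) (hperp : ⟪x, V x⟫ = 0) :
    (∀ j : ℕ, 1 ≤ j → j ≤ n →
      ‖Real.cos (((j : ℝ) - 1) * π / ((n : ℝ) - 1)) • x +
        Real.sin (((j : ℝ) - 1) * π / ((n : ℝ) - 1)) • V x‖ = 1) ∧
    (∀ j : ℕ, 1 ≤ j → j + 1 ≤ n →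
      Real.cos (((j : ℝ) - 1) * π / ((n : ℝ) - 1)) • x +
        Real.sin (((j : ℝ) - 1) * π / ((n : ℝ) - 1)) • V x ≠
      Real.cos ((((j : ℝ) + 1) - 1) * π / ((n : ℝ) - 1)) • x +
        Real.sin ((((j : ℝ) + 1) - 1) * π / ((n : ℝ) - 1)) • V x) ∧
    (Real.cos (((n : ℝ) - 1) * π / ((n : ℝ) - 1)) • x +
        Real.sin (((n : ℝ) - 1) * π / ((n : ℝ) - 1)) • V x ≠
      Real.cos (((1 : ℝ) - 1) * π / ((n : ℝ) - 1)) • x +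
        Real.sin (((1 : ℝ) - 1) * π / ((n : ℝ) - 1)) • V x) ∧
    (∀ j : ℕ, Continuous fun z : EuclideanSpace ℝ (Fin (m + 1)) =>
      Real.cos (((j : ℝ) - 1) * π / ((n : ℝ) - 1)) • z +
        Real.sin (((j : ℝ) - 1) * π / ((n : ℝ) - 1)) • V z) := by
  have hn1 : (1 : ℝ) ≤ (n : ℝ) - 1 := by
    have : (2 : ℝ) ≤ (n : ℝ) := by exact_mod_cast hn
    linarith
  have hn0 : ((n : ℝ) - 1) ≠ 0 := by linarith
  refine ⟨?_, ?_, ?_, ?_⟩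
  · intro j _ _
    set a := Real.cos (((j : ℝ) - 1) * π / ((n : ℝ) - 1))
    set b := Real.sin (((j : ℝ) - 1) * π / ((n : ℝ) - 1))
    have hsq : ‖a • x + b • V x‖ ^ 2 = 1 := by
      rw [norm_add_sq_real, real_inner_smul_left, real_inner_smul_right, hperp,
        norm_smul, norm_smul, hx, hVx]
      simp only [mul_zero, Real.norm_eq_abs, mul_one]
      have := Real.sin_sq_add_cos_sq (((j : ℝ) - 1) * π / ((n : ℝ) - 1))
      rw [sq_abs, sq_abs]
      nlinarith [this]
    nlinarith [norm_nonneg (a • x + b • V x), hsq]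
  · intro j hj1 hjn heq
    have hc := congrArg (fun w => ⟪x, w⟫) heq
    rw [inner_comb x (V x) hx hperp, inner_comb x (V x) hx hperp] at hc
    -- hc : cos θ_j = cos θ_{j+1}, but both angles in [0, π] and distinct
    have hθj : ((j : ℝ) - 1) * π / ((n : ℝ) - 1) ∈ Set.Icc 0 π := by
      constructor
      · apply div_nonneg
        · apply mul_nonneg
          · have : (1 : ℝ) ≤ (j : ℝ) := by exact_mod_cast hj1
            linarith
          · exact Real.pi_pos.le
        · linarith
      · rw [div_le_iff₀ (by linarith)]
        have hjr : (j : ℝ) ≤ (n : ℝ) - 1 := by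
          have : (j : ℝ) + 1 ≤ (n : ℝ) := by exact_mod_cast hjn
          linarith
        have : (1 : ℝ) ≤ (j : ℝ) := by exact_mod_cast hj1
        nlinarith [Real.pi_pos]
    have hθj1 : (((j : ℝ) + 1) - 1) * π / ((n : ℝ) - 1) ∈ Set.Icc 0 π := by
      constructor
      · apply div_nonneg
        · apply mul_nonneg
          · have : (0 : ℝ) ≤ (j : ℝ) := Nat.cast_nonneg j
            linarith
          · exact Real.pi_pos.le
        · linarith
      · rw [div_le_iff₀ (by linarith)]
        have hjr : (j : ℝ) + 1 ≤ (n : ℝ) := by exact_mod_cast hjn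
        nlinarith [Real.pi_pos]
    have h2 := Real.injOn_cos hθj hθj1 hc
    rw [div_eq_div_iff hn0 hn0] at h2
    nlinarith [Real.pi_pos, h2, hn1]
  · intro heq
    have hc := congrArg (fun w => ⟪x, w⟫) heq
    rw [inner_comb x (V x) hx hperp, inner_comb x (V x) hx hperp] at hc
    rw [mul_div_cancel_left₀ π hn0, Real.cos_pi] at hc
    norm_num at hc
  · intro j
    exact ((continuous_const (y := (Real.cos (((j : ℝ) - 1) * π / ((n : ℝ) - 1))))).smul continuous_id).add
      ((continuous_const (y := (Real.sin (((j : ℝ) - 1) * π / ((n : ℝ) - 1))))).smul hV)
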